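/- Finite axiomatisability criterion: for r ∈ [0,1], the theory Θ_r is finitely axiomatisable in Ł₁ (i.e., there exists a finite set S ⊆ Form₁ with Θ_r = {α ∈ Form₁ : S ⊢ α}) if and only if r is a rational number. -/

import Mathlib

/-- Formulas of Łukasiewicz infinite-valued propositional logic:
propositional variables `var n` (with `X₁ = var 0`), falsum `⊥`, negation, implication. -/
inductive LForm : Type
  | var : ℕ → LForm
  | bot : LForm
  | neg : LForm → LForm
  | imp : LForm → LForm → LForm

namespace LForm

/-- The propositional variable X₁. -/
def X1 : LForm := var 0

/-- Lattice disjunction: α ∨ β := (α → β) → β. -/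
def or (α β : LForm) : LForm := imp (imp α β) β

/-- Lattice conjunction: α ∧ β := ¬(¬α ∨ ¬β). -/
def and (α β : LForm) : LForm := neg (or (neg α) (neg β))

/-- Biconditional: α ↔ β := (α → β) ∧ (β → α). -/
def iff (α β : LForm) : LForm := and (imp α β) (imp β α)

/-- Strong disjunction: α ⊕ β := ¬α → β. -/
def oplus (α β : LForm) : LForm := imp (neg α) β

/-- The predicate "all variables occurring in the formula are X₁". -/
def onlyX1 : LForm → Prop
  | var n => n = 0
  | bot => True
  | neg α => onlyX1 α
  | imp α β => onlyX1 α ∧ onlyX1 β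

end LForm

/-- Form₁: the set of formulas built from the single variable X₁ (and ⊥, ¬, →). -/
def Form1 : Set LForm := { α | α.onlyX1 }

/-- Provability in Łukasiewicz logic from a set `S` of assumptions: the smallest
relation containing the members of `S` and all instances of the axiom schemata
(A0)–(A4), closed under modus ponens. -/
inductive LProv (S : Set LForm) : LForm → Prop
  | hyp {α : LForm} : α ∈ S → LProv S α
  | a0 (α : LForm) : LProv S (LForm.bot.imp α)
  | a1 (α β : LForm) : LProv S (α.imp (β.imp α))
  | a2 (α β γ : LForm) : LProv S ((α.imp β).imp ((β.imp γ).imp (α.imp γ)))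
  | a3 (α β : LForm) : LProv S (((α.imp β).imp β).imp ((β.imp α).imp α))
  | a4 (α β : LForm) : LProv S ((α.neg.imp β.neg).imp (β.imp α))
  | mp {α β : LForm} : LProv S (α.imp β) → LProv S α → LProv S β

/-- A [0,1]-valued evaluation (possible world) for Łukasiewicz logic. -/
structure LEval where
  w : LForm → ℝ
  mem01 : ∀ α, w α ∈ Set.Icc (0 : ℝ) 1
  map_bot : w LForm.bot = 0
  map_neg : ∀ α, w α.neg = 1 - w α
  map_imp : ∀ α β, w (α.imp β) = min 1 (1 - (w α - w β))

/-- Semantic consequence: every evaluation making all of `S` true (value 1)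
makes `α` true. -/
def LSem (S : Set LForm) (α : LForm) : Prop :=
  ∀ v : LEval, (∀ β ∈ S, v.w β = 1) → v.w α = 1

/-- The evaluation determined compositionally by an atomic assignment `v`. -/
def evalFun (v : ℕ → ℝ) : LForm → ℝ
  | .var n => v n
  | .bot => 0
  | .neg α => 1 - evalFun v α
  | .imp α β => min 1 (1 - (evalFun v α - evalFun v β))

/-- Θ_r: the one-variable formulas true (value 1) in every possible world `w`
with `w(X₁) = r`. -/
def Theta (r : ℝ) : Set LForm :=
  { α | α ∈ Form1 ∧ ∀ v : LEval, v.w LForm.X1 = r → v.w α = 1 }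

/-- Θ_T: the one-variable formulas true (value 1) in every possible world `w`
with `w(X₁) ∈ T`. -/
def ThetaT (T : Set ℝ) : Set LForm :=
  { α | α ∈ Form1 ∧ ∀ v : LEval, v.w LForm.X1 ∈ T → v.w α = 1 }

namespace LTools
open LForm LProv
variable {S : Set LForm}

/-- syllogism rule -/
theorem syl {a b c : LForm} (h1 : LProv S (a.imp b)) (h2 : LProv S (b.imp c)) :
    LProv S (a.imp c) := mp (mp (a2 a b c) h1) h2

/-- from ⊢ θ infer ⊢ δ → θ -/
theorem wk {θ : LForm} (δ : LForm) (h : LProv S θ) : LProv S (δ.imp θ) :=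
  mp (a1 θ δ) h

/-- from ⊢ θ infer ⊢ (θ → a) → a -/
theorem wstar {θ : LForm} (a : LForm) (h : LProv S θ) :
    LProv S ((θ.imp a).imp a) :=
  mp (a3 a θ) (wk (a.imp θ) h)

/-- from ⊢ A → (B → C) and ⊢ B infer ⊢ A → C -/
theorem mpi {A B C : LForm} (h1 : LProv S (A.imp (B.imp C))) (h2 : LProv S B) :
    LProv S (A.imp C) := syl h1 (wstar C h2)

/-- prefixing rule: from ⊢ g → d infer ⊢ (a → g) → (a → d) -/
theorem pre {g d : LForm} (a : LForm) (h : LProv S (g.imp d)) :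
    LProv S ((a.imp g).imp (a.imp d)) := mpi (a2 a g d) h

/-- suffixing rule: from ⊢ a → b infer ⊢ (b → c) → (a → c) -/
theorem suf {a b : LForm} (c : LForm) (h : LProv S (a.imp b)) :
    LProv S ((b.imp c).imp (a.imp c)) := mp (a2 a b c) h

theorem t2 (x y h : LForm) : LProv S (((y.imp x).imp h).imp (x.imp h)) :=
  mp (a2 x (y.imp x) h) (a1 x y)

theorem t4 (b a : LForm) : LProv S (b.neg.imp (b.imp a)) :=
  mp (t2 b.neg a.neg (b.imp a)) (a4 a b)

theorem t5 (b a h : LForm) : LProv S (((b.imp a).imp h).imp (b.neg.imp h)) :=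
  mp (a2 b.neg (b.imp a) h) (t4 b a)

theorem t6 (a b h : LForm) : LProv S (((b.imp a).imp h).imp ((a.neg.imp b.neg).imp h)) :=
  mp (a2 (a.neg.imp b.neg) (b.imp a) h) (a4 a b)

theorem t8 (y u v : LForm) : LProv S (y.imp (u.imp (v.imp u))) :=
  mp (a1 (u.imp (v.imp u)) y) (a1 u v)

theorem t9 (z u v : LForm) : LProv S (((u.imp (v.imp u)).imp z).imp z) :=
  mp (a3 z (u.imp (v.imp u))) (t8 (z.imp (u.imp (v.imp u))) u v)

theorem t10 (u v c : LForm) : LProv S ((c.neg.imp (u.imp (v.imp u)).neg).imp c) :=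
  mp (t6 c (u.imp (v.imp u)) c) (t9 c u v)

/-- double negation elimination -/
theorem dne (c : LForm) : LProv S (c.neg.neg.imp c) :=
  mp (t5 c.neg (c.imp (c.imp c)).neg c) (t10 c c c)

/-- double negation introduction -/
theorem dni (b : LForm) : LProv S (b.imp b.neg.neg) :=
  mp (a4 b.neg.neg b) (dne b.neg)

/-- contraposition rule -/
theorem contra {a b : LForm} (h : LProv S (a.imp b)) :
    LProv S (b.neg.imp a.neg) :=
  mp (a4 a.neg b.neg) (syl (syl (dne a) h) (dni b))

end LTools

namespace LSound

theorem evalFun_mem01 {v : ℕ → ℝ} (hv : ∀ n, v n ∈ Set.Icc (0:ℝ) 1) :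
    ∀ α, evalFun v α ∈ Set.Icc (0:ℝ) 1 := by
  intro α
  induction α with
  | var n => exact hv n
  | bot => simp [evalFun]
  | neg α ih =>
      simp only [evalFun, Set.mem_Icc] at *; constructor <;> linarith [ih.1, ih.2]
  | imp α β ihα ihβ =>
      simp only [evalFun, Set.mem_Icc] at *
      constructor
      · apply le_min <;> linarith [ihα.1, ihα.2, ihβ.1, ihβ.2]
      · exact min_le_left _ _

/-- The evaluation determined by an atomic assignment with values in [0,1]. -/
def mkEval (v : ℕ → ℝ) (hv : ∀ n, v n ∈ Set.Icc (0:ℝ) 1) : LEval where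
  w := evalFun v
  mem01 := evalFun_mem01 hv
  map_bot := rfl
  map_neg := fun _ => rfl
  map_imp := fun _ _ => rfl

theorem eval_eq_evalFun (e : LEval) (α : LForm) :
    e.w α = evalFun (fun n => e.w (.var n)) α := by
  induction α with
  | var n => rfl
  | bot => exact e.map_bot
  | neg α ih => rw [evalFun, ← ih, e.map_neg]
  | imp α β ihα ihβ => rw [evalFun, ← ihα, ← ihβ, e.map_imp]

theorem evalFun_onlyX1 {v : ℕ → ℝ} {α : LForm} (h : α.onlyX1) :
    evalFun v α = evalFun (fun _ => v 0) α := by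
  induction α with
  | var n => cases h; rfl
  | bot => rfl
  | neg α ih => rw [evalFun, evalFun, ih h]
  | imp α β ihα ihβ => rw [evalFun, evalFun, ihα h.1, ihβ h.2]

/-- Soundness of the proof system. -/
theorem sound {S : Set LForm} {α : LForm} (h : LProv S α) (e : LEval)
    (hS : ∀ β ∈ S, e.w β = 1) : e.w α = 1 := by
  induction h with
  | hyp h => exact hS _ h
  | a0 α =>
      have h1 := (e.mem01 α).1
      simp only [e.map_imp, e.map_bot, min_def]
      split_ifs <;> linarith
  | a1 α β =>
      obtain ⟨ha0, ha1⟩ := e.mem01 α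
      obtain ⟨hb0, hb1⟩ := e.mem01 β
      simp only [e.map_imp, min_def]
      split_ifs <;> linarith
  | a2 α β γ =>
      obtain ⟨ha0, ha1⟩ := e.mem01 α
      obtain ⟨hb0, hb1⟩ := e.mem01 β
      obtain ⟨hc0, hc1⟩ := e.mem01 γ
      simp only [e.map_imp, min_def]
      split_ifs <;> linarith
  | a3 α β =>
      obtain ⟨ha0, ha1⟩ := e.mem01 α
      obtain ⟨hb0, hb1⟩ := e.mem01 β
      simp only [e.map_imp, min_def]
      split_ifs <;> linarith
  | a4 α β =>
      obtain ⟨ha0, ha1⟩ := e.mem01 α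
      obtain ⟨hb0, hb1⟩ := e.mem01 β
      simp only [e.map_imp, e.map_neg, min_def]
      split_ifs <;> linarith
  | @mp α β hab ha ihab iha =>
      obtain ⟨hb0, hb1⟩ := e.mem01 β
      rw [e.map_imp, iha, min_def] at ihab
      split_ifs at ihab <;> linarith

end LSound

namespace Lirr
open LForm LSound

/-- n-fold strong disjunction of a formula with itself (n·γ). -/
def nmul (γ : LForm) : ℕ → LForm
  | 0 => LForm.bot
  | n + 1 => LForm.oplus γ (nmul γ n)

theorem nmul_onlyX1 {γ : LForm} (h : γ.onlyX1) (n : ℕ) : (nmul γ n).onlyX1 := by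
  induction n with
  | zero => trivial
  | succ n ih => exact ⟨h, ih⟩

theorem evalFun_nmul {v : ℕ → ℝ} {γ : LForm} (h0 : 0 ≤ evalFun v γ) (n : ℕ) :
    evalFun v (nmul γ n) = min 1 (n * evalFun v γ) := by
  induction n with
  | zero => simp [nmul, evalFun]
  | succ n ih =>
      show min 1 (1 - (1 - evalFun v γ - evalFun v (nmul γ n))) = _
      rw [ih]
      rcases le_total (1:ℝ) (n * evalFun v γ) with h | h
      · rw [min_eq_left h]
        have e1 : (1:ℝ) ≤ 1 - (1 - evalFun v γ - 1) := by linarith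
        have e2 : (1:ℝ) ≤ (↑(n+1) : ℝ) * evalFun v γ := by push_cast; nlinarith
        rw [min_eq_left e1, min_eq_left e2]
      · rw [min_eq_right h]
        push_cast
        congr 1
        ring

/-- Every one-variable formula is affine with integer coefficients near an
irrational point. -/
theorem localAffine {r : ℝ} (hirr : ∀ q : ℚ, (q : ℝ) ≠ r) (α : LForm) :
    ∃ (a b : ℤ) (ε : ℝ), 0 < ε ∧
      ∀ x : ℝ, |x - r| < ε → evalFun (fun _ => x) α = a * x + b := by
  induction α with
  | var n =>
      exact ⟨1, 0, 1, one_pos, by intro x _; simp [evalFun]⟩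
  | bot =>
      exact ⟨0, 0, 1, one_pos, by intro x _; simp [evalFun]⟩
  | neg α ih =>
      obtain ⟨a, b, ε, hε, h⟩ := ih
      refine ⟨-a, 1 - b, ε, hε, fun x hx => ?_⟩
      show 1 - evalFun (fun _ => x) α = _
      rw [h x hx]; push_cast; ring
  | imp α β ihα ihβ =>
      obtain ⟨a1, b1, ε1, hε1, h1⟩ := ihα
      obtain ⟨a2, b2, ε2, hε2, h2⟩ := ihβ
      set c : ℤ := a2 - a1 with hcdef
      set d : ℤ := 1 - b1 + b2 with hddef
      have key : ∀ x : ℝ, |x - r| < min ε1 ε2 →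
          evalFun (fun _ => x) (α.imp β) = min 1 ((c : ℝ) * x + d) := by
        intro x hx
        show min 1 (1 - (evalFun (fun _ => x) α - evalFun (fun _ => x) β)) = _
        rw [h1 x (lt_of_lt_of_le hx (min_le_left _ _)),
            h2 x (lt_of_lt_of_le hx (min_le_right _ _))]
        congr 1
        push_cast [hcdef, hddef]; ring
      by_cases hc : c = 0
      · rcases le_total ((d : ℝ)) 1 with hd | hd
        · refine ⟨0, d, min ε1 ε2, lt_min hε1 hε2, fun x hx => ?_⟩
          rw [key x hx, hc]; push_cast
          rw [min_eq_right (by linarith)]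
        · refine ⟨0, 1, min ε1 ε2, lt_min hε1 hε2, fun x hx => ?_⟩
          rw [key x hx, hc]; push_cast
          rw [min_eq_left (by linarith)]; ring
      · have hcR : (c : ℝ) ≠ 0 := Int.cast_ne_zero.mpr hc
        have hne : (c : ℝ) * r + d ≠ 1 := by
          intro he
          apply hirr ((1 - (d : ℚ)) / (c : ℚ))
          push_cast
          rw [div_eq_iff hcR]
          linarith
        set δ : ℝ := |1 - ((c : ℝ) * r + d)| with hδdef
        have hδ : 0 < δ := abs_pos.mpr (by intro h; apply hne; linarith)
        set ε3 : ℝ := min (min ε1 ε2) (δ / |(c : ℝ)|) with hε3def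
        have hε3 : 0 < ε3 := lt_min (lt_min hε1 hε2) (div_pos hδ (abs_pos.mpr hcR))
        have hclose : ∀ x : ℝ, |x - r| < ε3 → |((c : ℝ) * x + d) - ((c : ℝ) * r + d)| < δ := by
          intro x hx
          have : |((c : ℝ) * x + d) - ((c : ℝ) * r + d)| = |(c : ℝ)| * |x - r| := by
            rw [← abs_mul]; congr 1; ring
          rw [this]
          calc |(c : ℝ)| * |x - r| < |(c : ℝ)| * (δ / |(c : ℝ)|) := by
                apply mul_lt_mul_of_pos_left (lt_of_lt_of_le hx (min_le_right _ _))
                  (abs_pos.mpr hcR)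
            _ = δ := by field_simp
        rcases lt_or_gt_of_ne hne with hlt | hgt
        · refine ⟨c, d, ε3, hε3, fun x hx => ?_⟩
          have h5 := hclose x hx
          rw [key x (lt_of_lt_of_le hx (min_le_left _ _))]
          rw [hδdef, abs_of_pos (show (0:ℝ) < 1 - ((c : ℝ) * r + d) by linarith)] at h5
          have h6 : (c : ℝ) * x + d < 1 := by
            rcases abs_lt.mp h5 with ⟨hl, hr⟩; linarith
          rw [min_eq_right (le_of_lt h6)]
        · refine ⟨0, 1, ε3, hε3, fun x hx => ?_⟩
          have h5 := hclose x hx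
          rw [key x (lt_of_lt_of_le hx (min_le_left _ _))]
          rw [hδdef, abs_of_neg (show 1 - ((c : ℝ) * r + d) < 0 by linarith)] at h5
          have h6 : 1 < (c : ℝ) * x + d := by
            rcases abs_lt.mp h5 with ⟨hl, hr⟩; linarith
          rw [min_eq_left (le_of_lt h6)]; push_cast; ring

/-- A one-variable formula true at an irrational point is true on a
neighbourhood of it. -/
theorem onball_one {r : ℝ} (hirr : ∀ q : ℚ, (q : ℝ) ≠ r) {s : LForm}
    (hs : evalFun (fun _ => r) s = 1) :
    ∃ ε : ℝ, 0 < ε ∧ ∀ x : ℝ, |x - r| < ε → evalFun (fun _ => x) s = 1 := by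
  obtain ⟨a, b, ε, hε, h⟩ := localAffine hirr s
  have hr : (a : ℝ) * r + b = 1 := by
    rw [← h r (by simpa using hε), hs]
  have ha : a = 0 := by
    by_contra ha
    have haR : (a : ℝ) ≠ 0 := Int.cast_ne_zero.mpr ha
    apply hirr ((1 - (b : ℚ)) / (a : ℚ))
    push_cast
    rw [div_eq_iff haR]
    linarith
  refine ⟨ε, hε, fun x hx => ?_⟩
  rw [h x hx, ha]
  rw [ha] at hr
  push_cast at hr ⊢
  linarith

end Lirr

namespace Lirr
open LForm LSound

theorem bisect {r : ℝ} (hirr : ∀ q : ℚ, (q : ℝ) ≠ r) (h0 : 0 ≤ r) (h1 : r ≤ 1) (k : ℕ) :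
    ∃ (γ : LForm) (s t : ℚ), γ.onlyX1 ∧ (s : ℝ) < r ∧ r < (t : ℝ) ∧
      t - s = (1/2 : ℚ)^k ∧ 0 ≤ s ∧ t ≤ 1 ∧
      ∀ x : ℝ, (s : ℝ) ≤ x → x ≤ (t : ℝ) →
        evalFun (fun _ => x) γ = 2^k * (x - (s : ℝ)) := by
  induction k with
  | zero =>
      refine ⟨LForm.X1, 0, 1, rfl, ?_, ?_, by norm_num, le_refl _, le_refl _, ?_⟩
      · have := hirr 0; push_cast at this ⊢
        exact lt_of_le_of_ne h0 this
      · have := hirr 1; push_cast at this ⊢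
        exact lt_of_le_of_ne h1 (Ne.symm this)
      · intro x _ _; show x = _; push_cast; ring
  | succ k ih =>
      obtain ⟨γ, s, t, hγ, hs, ht, hts, hs0, ht1, heval⟩ := ih
      have hstQ : s < t := by
        have : (0:ℚ) < (1/2:ℚ)^k := by positivity
        linarith
      set m : ℚ := (s + t) / 2 with hmdef
      have hsm : s < m := by rw [hmdef]; linarith
      have hmt : m < t := by rw [hmdef]; linarith
      have hms : m - s = (1/2 : ℚ)^(k+1) := by
        rw [hmdef]; rw [pow_succ]; linarith
      have hmsR : (m : ℝ) - (s : ℝ) = (1/2 : ℝ)^(k+1) := by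
        have h2 : ((m - s : ℚ) : ℝ) = (((1/2 : ℚ)^(k+1) : ℚ) : ℝ) := by rw [hms]
        push_cast at h2
        linarith
      have htsR : (t : ℝ) - (s : ℝ) = (1/2 : ℝ)^k := by
        have h2 : ((t - s : ℚ) : ℝ) = (((1/2 : ℚ)^k : ℚ) : ℝ) := by rw [hts]
        push_cast at h2
        linarith
      have hpow : (2:ℝ)^(k+1) * (1/2:ℝ)^(k+1) = 1 := by
        rw [← mul_pow]; norm_num
      rcases lt_or_gt_of_ne (hirr m) with hrm | hrm
      · -- m < r : right half, γ' = ¬(γ → ¬γ)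
        refine ⟨(γ.imp γ.neg).neg, m, t, ⟨hγ, hγ⟩, hrm, ht, by linarith, by linarith, ht1, ?_⟩
        intro x hx1 hx2
        have hxs : (s:ℝ) ≤ x := by
          have : (s:ℝ) < m := by exact_mod_cast hsm
          linarith
        have hu := heval x hxs hx2
        show 1 - min 1 (1 - (evalFun (fun _ => x) γ - (1 - evalFun (fun _ => x) γ))) = _
        rw [hu]
        have hhalf : (1:ℝ)/2 ≤ 2^k * (x - (s:ℝ)) := by
          have h2 : (2:ℝ)^k * ((m:ℝ) - s) = 2^k * (1/2)^(k+1) := by rw [hmsR]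
          have h3 : (2:ℝ)^k * (1/2)^(k+1) = 1/2 := by
            rw [pow_succ]
            have : (2:ℝ)^k * (1/2)^k = 1 := by rw [← mul_pow]; norm_num
            nlinarith [this]
          nlinarith [pow_pos (show (0:ℝ) < 2 by norm_num) k]
        rw [min_eq_right (by linarith)]
        have hone : (2:ℝ)^(k+1) * ((m:ℝ) - s) = 1 := by rw [hmsR, hpow]
        linear_combination hone
      · -- r < m : left half, γ' = ¬γ → γ
        refine ⟨γ.oplus γ, s, m, ⟨hγ, hγ⟩, hs, hrm, by linarith, hs0, by linarith, ?_⟩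
        intro x hx1 hx2
        have hxt : x ≤ (t:ℝ) := by
          have : (m:ℝ) < t := by exact_mod_cast hmt
          linarith
        have hu := heval x hx1 hxt
        show min 1 (1 - ((1 - evalFun (fun _ => x) γ) - evalFun (fun _ => x) γ)) = _
        rw [hu]
        have hle : (2:ℝ)^(k+1) * (x - (s:ℝ)) ≤ 1 := by
          have : (2:ℝ)^(k+1) * ((m:ℝ) - s) = 1 := by rw [hmsR, hpow]
          nlinarith [pow_pos (show (0:ℝ) < 2 by norm_num) (k+1)]
        rw [pow_succ] at hle
        rw [min_eq_right (by nlinarith [hle])]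
        ring

end Lirr

namespace Lirr
open LForm LSound

theorem uniform_eps {r : ℝ} (hirr : ∀ q : ℚ, (q : ℝ) ≠ r) {S : Set LForm}
    (hfin : S.Finite) (hS : ∀ s ∈ S, evalFun (fun _ => r) s = 1) :
    ∃ ε : ℝ, 0 < ε ∧ ∀ s ∈ S, ∀ x : ℝ, |x - r| < ε → evalFun (fun _ => x) s = 1 := by
  revert hS
  refine Set.Finite.induction_on S hfin ?_ ?_
  · intro _
    exact ⟨1, one_pos, fun s hs => absurd hs (Set.notMem_empty s)⟩
  · intro a T _ _ ih hS
    obtain ⟨ε1, hε1, h1⟩ := ih (fun s hs => hS s (Set.mem_insert_of_mem a hs))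
    obtain ⟨ε2, hε2, h2⟩ := onball_one hirr (hS a (Set.mem_insert a T))
    refine ⟨min ε1 ε2, lt_min hε1 hε2, fun s hs x hx => ?_⟩
    rcases hs with rfl | hs
    · exact h2 x (lt_of_lt_of_le hx (min_le_right _ _))
    · exact h1 s hs x (lt_of_lt_of_le hx (min_le_left _ _))

theorem not_fin_ax {r : ℝ} (h0 : 0 ≤ r) (h1 : r ≤ 1) (hirr : ∀ q : ℚ, (q : ℝ) ≠ r)
    {S : Set LForm} (hS1 : S ⊆ Form1) (hfin : S.Finite)
    (heq : Theta r = {α | α ∈ Form1 ∧ LProv S α}) : False := by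
  have hrIcc : ∀ n : ℕ, (fun _ => r) n ∈ Set.Icc (0:ℝ) 1 := fun _ => ⟨h0, h1⟩
  -- every member of S has value 1 at r
  have hSv : ∀ s ∈ S, evalFun (fun _ => r) s = 1 := by
    intro s hs
    have hsθ : s ∈ Theta r := by
      rw [heq]; exact ⟨hS1 hs, LProv.hyp hs⟩
    exact hsθ.2 (mkEval (fun _ => r) hrIcc) rfl
  obtain ⟨ε, hε, hball⟩ := uniform_eps hirr hfin hSv
  obtain ⟨k, hk⟩ := exists_pow_lt_of_lt_one hε (show (1/2 : ℝ) < 1 by norm_num)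
  obtain ⟨γ, s, t, hγ, hs, ht, hts, hs0, ht1, heval⟩ := bisect hirr h0 h1 k
  have htsR : (t : ℝ) - (s : ℝ) = (1/2 : ℝ)^k := by
    have h2 : ((t - s : ℚ) : ℝ) = (((1/2 : ℚ)^k : ℚ) : ℝ) := by rw [hts]
    push_cast at h2
    linarith
  set u : ℝ := 2^k * (r - (s:ℝ)) with hudef
  have hpow : (2:ℝ)^k * (1/2:ℝ)^k = 1 := by rw [← mul_pow]; norm_num
  have hu0 : 0 < u := by
    apply mul_pos (pow_pos (by norm_num) k); linarith
  have hu1 : u < 1 := by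
    calc u < 2^k * ((t:ℝ) - s) := by
            apply mul_lt_mul_of_pos_left (by linarith) (pow_pos (by norm_num) k)
      _ = 1 := by rw [htsR, hpow]
  set M : ℕ := ⌊1/u⌋₊ + 1 with hMdef
  have hMu : 1 < (M : ℝ) * u := by
    have h3 : 1/u < (M : ℝ) := by
      rw [hMdef]; exact_mod_cast Nat.lt_succ_floor (1/u)
    calc (1:ℝ) = (1/u) * u := by field_simp
      _ < (M : ℝ) * u := by exact mul_lt_mul_of_pos_right h3 hu0
  set h : LForm := nmul γ M with hhdef
  have hhX1 : h.onlyX1 := nmul_onlyX1 hγ M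
  have hγr : evalFun (fun _ => r) γ = u := heval r (le_of_lt hs) (le_of_lt ht)
  -- h ∈ Theta r
  have hhθ : h ∈ Theta r := by
    refine ⟨hhX1, fun v hv => ?_⟩
    rw [eval_eq_evalFun v h, evalFun_onlyX1 hhX1]
    have hv0 : v.w (LForm.var 0) = r := hv
    rw [hv0]
    rw [evalFun_nmul (by
      have := evalFun_mem01 hrIcc γ
      exact this.1)]
    rw [hγr, min_eq_left (by linarith)]
  have hprov : LProv S h := by
    rw [heq] at hhθ; exact hhθ.2
  -- evaluate at s
  have hsr : (s:ℝ) ≤ 1 := by linarith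
  have hsIcc : ∀ n : ℕ, (fun _ => (s:ℝ)) n ∈ Set.Icc (0:ℝ) 1 := by
    intro _
    constructor
    · show (0:ℝ) ≤ (s:ℝ); exact_mod_cast hs0
    · show (s:ℝ) ≤ 1; linarith
  have hsound := LSound.sound hprov (mkEval (fun _ => (s:ℝ)) hsIcc) (by
    intro β hβ
    show evalFun (fun _ => (s:ℝ)) β = 1
    apply hball β hβ
    rw [abs_of_nonpos (by linarith)]
    calc -((s:ℝ) - r) = r - s := by ring
      _ < (t:ℝ) - s := by linarith
      _ = (1/2:ℝ)^k := htsR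
      _ < ε := hk)
  have hγs : evalFun (fun _ => (s:ℝ)) γ = 0 := by
    rw [heval (s:ℝ) le_rfl (by linarith)]; ring
  have : (mkEval (fun _ => (s:ℝ)) hsIcc).w h = 0 := by
    show evalFun (fun _ => (s:ℝ)) h = 0
    rw [hhdef, evalFun_nmul (by rw [hγs]), hγs]
    simp
  rw [hsound] at this
  norm_num at this

end Lirr

deriving instance DecidableEq for LForm

namespace Lrat
open LForm LSound LTools Lirr

/-- truth index of an implication in the finite chain -/
def mval (q j i : ℕ) : ℕ := min q (q - j + i)

/-- the truth index of a one-variable formula at the point p/q -/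
def kdeg (p q : ℕ) : LForm → ℕ
  | .var _ => p
  | .bot => 0
  | .neg α => q - kdeg p q α
  | .imp α β => mval q (kdeg p q α) (kdeg p q β)

theorem mval_le (q j i : ℕ) : mval q j i ≤ q := min_le_left _ _

theorem kdeg_le {p q : ℕ} (hpq : p ≤ q) (α : LForm) : kdeg p q α ≤ q := by
  induction α with
  | var n => exact hpq
  | bot => exact Nat.zero_le _
  | neg α ih => exact Nat.sub_le _ _
  | imp α β ihα ihβ => exact mval_le _ _ _

theorem cast_mval {q j i : ℕ} (hq : 0 < q) (hj : j ≤ q) :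
    ((mval q j i : ℕ) : ℝ) / q = min 1 (1 - ((j : ℝ)/q - (i : ℝ)/q)) := by
  have hqR : (0:ℝ) < (q:ℝ) := by exact_mod_cast hq
  rw [mval, Nat.cast_min]
  rw [← min_div_div_right (le_of_lt hqR)]
  congr 1
  · field_simp
  · push_cast [Nat.cast_sub hj]
    field_simp
    ring

section Main

variable {r : ℝ} {p q : ℕ} (c : ℕ → LForm)

/-- The finite axiom set for Θ_{p/q}. -/
def SF (p q : ℕ) (c : ℕ → LForm) : Finset LForm :=
  (({LForm.X1.imp (c p), (c p).imp LForm.X1, (c 0).imp LForm.bot, c q} : Finset LForm)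
  ∪ ((Finset.range (q+1)) ×ˢ (Finset.range (q+1))).image
      (fun ji => ((c ji.1).imp (c ji.2)).imp (c (mval q ji.1 ji.2)))
  ∪ ((Finset.range (q+1)) ×ˢ (Finset.range (q+1))).image
      (fun ji => (c (mval q ji.1 ji.2)).imp ((c ji.1).imp (c ji.2)))
  ∪ (Finset.range (q+1)).image (fun j => (c j).neg.imp (c (q - j)))
  ∪ (Finset.range (q+1)).image (fun j => (c (q - j)).imp (c j).neg))

theorem mem_SF_1 : LForm.X1.imp (c p) ∈ SF p q c := by
  apply Finset.mem_union_left; apply Finset.mem_union_left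
  apply Finset.mem_union_left; apply Finset.mem_union_left
  simp

theorem mem_SF_2 : (c p).imp LForm.X1 ∈ SF p q c := by
  apply Finset.mem_union_left; apply Finset.mem_union_left
  apply Finset.mem_union_left; apply Finset.mem_union_left
  simp

theorem mem_SF_3 : (c 0).imp LForm.bot ∈ SF p q c := by
  apply Finset.mem_union_left; apply Finset.mem_union_left
  apply Finset.mem_union_left; apply Finset.mem_union_left
  simp

theorem mem_SF_4 : c q ∈ SF p q c := by
  apply Finset.mem_union_left; apply Finset.mem_union_left
  apply Finset.mem_union_left; apply Finset.mem_union_left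
  simp

theorem mem_SF_imp1 {j i : ℕ} (hj : j ≤ q) (hi : i ≤ q) :
    ((c j).imp (c i)).imp (c (mval q j i)) ∈ SF p q c := by
  apply Finset.mem_union_left; apply Finset.mem_union_left
  apply Finset.mem_union_left; apply Finset.mem_union_right
  exact Finset.mem_image.mpr ⟨(j, i), by
    simp [Finset.mem_product, Nat.lt_succ_iff, hj, hi]⟩

theorem mem_SF_imp2 {j i : ℕ} (hj : j ≤ q) (hi : i ≤ q) :
    (c (mval q j i)).imp ((c j).imp (c i)) ∈ SF p q c := by
  apply Finset.mem_union_left; apply Finset.mem_union_left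
  apply Finset.mem_union_right
  exact Finset.mem_image.mpr ⟨(j, i), by
    simp [Finset.mem_product, Nat.lt_succ_iff, hj, hi]⟩

theorem mem_SF_neg1 {j : ℕ} (hj : j ≤ q) :
    (c j).neg.imp (c (q - j)) ∈ SF p q c := by
  apply Finset.mem_union_left; apply Finset.mem_union_right
  exact Finset.mem_image.mpr ⟨j, by simp [Nat.lt_succ_iff, hj]⟩

theorem mem_SF_neg2 {j : ℕ} (hj : j ≤ q) :
    (c (q - j)).imp (c j).neg ∈ SF p q c := by
  apply Finset.mem_union_right
  exact Finset.mem_image.mpr ⟨j, by simp [Nat.lt_succ_iff, hj]⟩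

theorem SF_onlyX1 (hcX : ∀ j, (c j).onlyX1) :
    ∀ φ ∈ SF p q c, φ.onlyX1 := by
  intro φ hφ
  simp only [SF, Finset.mem_union, Finset.mem_image, Finset.mem_insert,
    Finset.mem_singleton, Finset.mem_product, Finset.mem_range] at hφ
  rcases hφ with ((((h | h | h | h) | ⟨ji, _, rfl⟩) | ⟨ji, _, rfl⟩) | ⟨j, _, rfl⟩) | ⟨j, _, rfl⟩
  · subst h; exact ⟨rfl, hcX p⟩
  · subst h; exact ⟨hcX p, rfl⟩
  · subst h; exact ⟨hcX 0, trivial⟩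
  · subst h; exact hcX q
  · exact ⟨⟨hcX _, hcX _⟩, hcX _⟩
  · exact ⟨hcX _, hcX _, hcX _⟩
  · exact ⟨hcX _, hcX _⟩
  · exact ⟨hcX _, hcX _⟩

/-- the syntactic core: every one-variable formula is provably equivalent to
its truth value over the axiom set SF -/
theorem syn (hpq : p ≤ q) {α : LForm} (hα : α.onlyX1) :
    LProv (↑(SF p q c) : Set LForm) (α.imp (c (kdeg p q α))) ∧
    LProv (↑(SF p q c) : Set LForm) ((c (kdeg p q α)).imp α) := by
  induction α with
  | var n =>
      have h0 : n = 0 := hα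
      subst h0
      exact ⟨LProv.hyp (by exact_mod_cast mem_SF_1 c),
             LProv.hyp (by exact_mod_cast mem_SF_2 c)⟩
  | bot =>
      exact ⟨LProv.a0 (c 0), LProv.hyp (by exact_mod_cast mem_SF_3 c)⟩
  | neg α ih =>
      obtain ⟨ih1, ih2⟩ := ih hα
      have hk : kdeg p q α ≤ q := kdeg_le hpq α
      constructor
      · exact syl (contra ih2) (LProv.hyp (by exact_mod_cast mem_SF_neg1 c hk))
      · exact syl (LProv.hyp (by exact_mod_cast mem_SF_neg2 c hk)) (contra ih1)
  | imp α β ihα ihβ =>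
      obtain ⟨ihα1, ihα2⟩ := ihα hα.1
      obtain ⟨ihβ1, ihβ2⟩ := ihβ hα.2
      have hj : kdeg p q α ≤ q := kdeg_le hpq α
      have hi : kdeg p q β ≤ q := kdeg_le hpq β
      set j := kdeg p q α
      set i := kdeg p q β
      constructor
      · have s1 : LProv (↑(SF p q c) : Set LForm) ((α.imp β).imp ((c j).imp β)) :=
          LProv.mp (LProv.a2 (c j) α β) ihα2
        have s2 : LProv (↑(SF p q c) : Set LForm) (((c j).imp β).imp ((c j).imp (c i))) :=
          pre (c j) ihβ1
        exact syl (syl s1 s2) (LProv.hyp (by exact_mod_cast mem_SF_imp1 c hj hi))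
      · have s1 : LProv (↑(SF p q c) : Set LForm) (((c j).imp (c i)).imp (α.imp (c i))) :=
          LProv.mp (LProv.a2 α (c j) (c i)) ihα1
        have s2 : LProv (↑(SF p q c) : Set LForm) ((α.imp (c i)).imp (α.imp β)) :=
          pre α ihβ2
        exact syl (LProv.hyp (by exact_mod_cast mem_SF_imp2 c hj hi)) (syl s1 s2)

end Main
end Lrat

namespace Lrat
open LForm LSound LTools Lirr

theorem imp_one {v : ℕ → ℝ} {α β : LForm}
    (h : evalFun v α ≤ evalFun v β) : evalFun v (α.imp β) = 1 := by
  show min 1 (1 - (evalFun v α - evalFun v β)) = 1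
  rw [min_eq_left (by linarith)]

section Main2
variable {r : ℝ} {p q : ℕ} (c : ℕ → LForm)

theorem kdeg_sem (hq : 0 < q) (hpq : p ≤ q) (hrp : r = (p : ℝ)/q) {α : LForm}
    (hα : α.onlyX1) :
    evalFun (fun _ => r) α = (kdeg p q α : ℝ)/q := by
  have hqR : (0:ℝ) < q := by exact_mod_cast hq
  induction α with
  | var n => exact hrp
  | bot => show (0:ℝ) = ((0:ℕ):ℝ)/q; simp
  | neg α ih =>
      show 1 - evalFun (fun _ => r) α = _
      rw [ih hα]
      show _ = ((q - kdeg p q α : ℕ) : ℝ)/q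
      rw [Nat.cast_sub (kdeg_le hpq α)]
      field_simp
  | imp α β ihα ihβ =>
      show min 1 (1 - (evalFun (fun _ => r) α - evalFun (fun _ => r) β)) = _
      rw [ihα hα.1, ihβ hα.2]
      exact (cast_mval hq (kdeg_le hpq α)).symm

theorem SF_val (hq : 0 < q) (hpq : p ≤ q) (hrp : r = (p : ℝ)/q)
    (hcv : ∀ j, j ≤ q → evalFun (fun _ => r) (c j) = (j : ℝ)/q) :
    ∀ φ ∈ SF p q c, evalFun (fun _ => r) φ = 1 := by
  have hqR : (0:ℝ) < q := by exact_mod_cast hq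
  have hX1 : evalFun (fun _ => r) LForm.X1 = r := rfl
  intro φ hφ
  simp only [SF, Finset.mem_union, Finset.mem_image, Finset.mem_insert,
    Finset.mem_singleton, Finset.mem_product, Finset.mem_range] at hφ
  rcases hφ with ((((h | h | h | h) | ⟨ji, hji, rfl⟩) | ⟨ji, hji, rfl⟩) |
    ⟨j, hj, rfl⟩) | ⟨j, hj, rfl⟩
  · subst h
    exact imp_one (by rw [hX1, hcv p hpq, hrp])
  · subst h
    exact imp_one (by rw [hX1, hcv p hpq, hrp])
  · subst h
    refine imp_one ?_
    rw [hcv 0 (Nat.zero_le q)]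
    show _ ≤ evalFun (fun _ => r) LForm.bot
    show _ ≤ (0:ℝ)
    simp
  · subst h
    rw [hcv q le_rfl]
    field_simp
  · obtain ⟨hj, hi⟩ := hji
    rw [Nat.lt_succ_iff] at hj hi
    refine imp_one ?_
    have e1 : evalFun (fun _ => r) ((c ji.1).imp (c ji.2)) =
        min 1 (1 - ((ji.1 : ℝ)/q - (ji.2 : ℝ)/q)) := by
      show min 1 (1 - (evalFun (fun _ => r) (c ji.1) - evalFun (fun _ => r) (c ji.2))) = _
      rw [hcv ji.1 hj, hcv ji.2 hi]
    rw [e1, hcv (mval q ji.1 ji.2) (mval_le _ _ _), cast_mval hq hj]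
  · obtain ⟨hj, hi⟩ := hji
    rw [Nat.lt_succ_iff] at hj hi
    refine imp_one ?_
    have e1 : evalFun (fun _ => r) ((c ji.1).imp (c ji.2)) =
        min 1 (1 - ((ji.1 : ℝ)/q - (ji.2 : ℝ)/q)) := by
      show min 1 (1 - (evalFun (fun _ => r) (c ji.1) - evalFun (fun _ => r) (c ji.2))) = _
      rw [hcv ji.1 hj, hcv ji.2 hi]
    rw [e1, hcv (mval q ji.1 ji.2) (mval_le _ _ _), cast_mval hq hj]
  · rw [Nat.lt_succ_iff] at hj
    refine imp_one ?_
    have e1 : evalFun (fun _ => r) (c j).neg = 1 - (j : ℝ)/q := by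
      show 1 - evalFun (fun _ => r) (c j) = _
      rw [hcv j hj]
    rw [e1, hcv (q - j) (Nat.sub_le _ _), Nat.cast_sub hj]
    have : ((q:ℝ) - j)/q = 1 - (j:ℝ)/q := by field_simp
    rw [this]
  · rw [Nat.lt_succ_iff] at hj
    refine imp_one ?_
    have e1 : evalFun (fun _ => r) (c j).neg = 1 - (j : ℝ)/q := by
      show 1 - evalFun (fun _ => r) (c j) = _
      rw [hcv j hj]
    rw [e1, hcv (q - j) (Nat.sub_le _ _), Nat.cast_sub hj]
    have : ((q:ℝ) - j)/q = 1 - (j:ℝ)/q := by field_simp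
    rw [this]

end Main2

/-- reachability of the value n/q at the point r by a one-variable formula -/
def Reach (r : ℝ) (q : ℕ) (n : ℕ) : Prop :=
  ∃ γ : LForm, γ.onlyX1 ∧ evalFun (fun _ => r) γ = (n : ℝ)/q

theorem reach_sub {r : ℝ} {q : ℕ} (hq : 0 < q) {a b : ℕ}
    (ha : Reach r q a) (hb : Reach r q b) : Reach r q (a - b) := by
  have hqR : (0:ℝ) < q := by exact_mod_cast hq
  obtain ⟨γa, hγa, va⟩ := ha
  obtain ⟨γb, hγb, vb⟩ := hb
  refine ⟨(γa.imp γb).neg, ⟨hγa, hγb⟩, ?_⟩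
  show 1 - min 1 (1 - (evalFun (fun _ => r) γa - evalFun (fun _ => r) γb)) = _
  rw [va, vb]
  rcases le_total a b with h | h
  · rw [Nat.sub_eq_zero_of_le h]
    have hab : (a:ℝ)/q ≤ (b:ℝ)/q := by
      have hab' : (a:ℝ) ≤ (b:ℝ) := by exact_mod_cast h
      exact div_le_div_of_nonneg_right hab' hqR.le
    rw [min_eq_left (by linarith)]
    simp
  · have hba : (b:ℝ)/q ≤ (a:ℝ)/q := by
      have hba' : (b:ℝ) ≤ (a:ℝ) := by exact_mod_cast h
      exact div_le_div_of_nonneg_right hba' hqR.le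
    rw [min_eq_right (by linarith)]
    rw [Nat.cast_sub h]
    field_simp
    ring

theorem reach_mulsub {r : ℝ} {q : ℕ} (hq : 0 < q) {a b : ℕ}
    (ha : Reach r q a) (hb : Reach r q b) : ∀ k, Reach r q (b - k * a)
  | 0 => by simpa using hb
  | (k+1) => by
      have h : b - (k+1) * a = (b - k * a) - a := by
        rw [Nat.succ_mul, ← Nat.sub_sub]
      rw [h]
      exact reach_sub hq (reach_mulsub hq ha hb k) ha

theorem reach_mod {r : ℝ} {q : ℕ} (hq : 0 < q) {a b : ℕ}
    (ha : Reach r q a) (hb : Reach r q b) : Reach r q (b % a) := by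
  have h2 := Nat.mod_add_div b a
  have h3 : b % a = b - (b / a) * a := by
    have := Nat.eq_sub_of_add_eq h2
    rw [this, mul_comm]
  rw [h3]
  exact reach_mulsub hq ha hb (b / a)

theorem reach_gcd {r : ℝ} {q : ℕ} (hq : 0 < q) :
    ∀ a b : ℕ, Reach r q a → Reach r q b → Reach r q (Nat.gcd a b) := by
  intro a
  induction a using Nat.strong_induction_on with
  | _ a ih =>
      intro b ha hb
      match a with
      | 0 => rw [Nat.gcd_zero_left]; exact hb
      | (a+1) =>
          rw [Nat.gcd_rec]
          exact ih (b % (a+1)) (Nat.mod_lt _ (Nat.succ_pos a)) (a+1)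
            (reach_mod hq ha hb) ha

theorem exists_c {r : ℝ} {p q : ℕ} (hq : 0 < q) (hpq : p ≤ q)
    (hcop : Nat.Coprime p q) (hrp : r = (p : ℝ)/q) :
    ∃ c : ℕ → LForm, (∀ j, (c j).onlyX1) ∧
      (∀ j, j ≤ q → evalFun (fun _ => r) (c j) = (j : ℝ)/q) := by
  have hqR : (0:ℝ) < q := by exact_mod_cast hq
  have hp : Reach r q p := ⟨LForm.X1, rfl, hrp⟩
  have hqq : Reach r q q := by
    refine ⟨LForm.bot.neg, trivial, ?_⟩
    show 1 - (0:ℝ) = _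
    field_simp
    norm_num
  have h1 : Reach r q 1 := by
    have := reach_gcd hq p q hp hqq
    rwa [hcop] at this
  obtain ⟨γ1, hγ1, v1⟩ := h1
  refine ⟨fun j => nmul γ1 j, fun j => nmul_onlyX1 hγ1 j, fun j hj => ?_⟩
  have hγpos : 0 ≤ evalFun (fun _ => r) γ1 := by rw [v1]; positivity
  rw [evalFun_nmul hγpos, v1]
  have hjq : (j:ℝ)/q ≤ 1 := by
    rw [div_le_one hqR]; exact_mod_cast hj
  rw [show (j:ℝ) * (((1:ℕ):ℝ)/q) = (j:ℝ)/q by push_cast; ring]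
  rw [min_eq_right hjq]

end Lrat

namespace Lrat
open LForm LSound LTools Lirr

theorem fin_ax {r : ℝ} (h0 : 0 ≤ r) (h1 : r ≤ 1) {q' : ℚ} (hq' : (q' : ℝ) = r) :
    ∃ S : Set LForm, S ⊆ Form1 ∧ S.Finite ∧
      Theta r = {α | α ∈ Form1 ∧ LProv S α} := by
  set p : ℕ := q'.num.toNat with hpdef
  set q : ℕ := q'.den with hqdef
  have hqpos : 0 < q := q'.pos
  have hqR : (0:ℝ) < q := by exact_mod_cast hqpos
  have hq0 : 0 ≤ q' := by
    have : (0:ℝ) ≤ (q' : ℝ) := by rw [hq']; exact h0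
    exact_mod_cast this
  have hnum : (0:ℤ) ≤ q'.num := Rat.num_nonneg.mpr hq0
  have hpz : ((p : ℕ) : ℤ) = q'.num := by
    rw [hpdef]; exact Int.toNat_of_nonneg hnum
  have hpR : ((p : ℕ) : ℝ) = ((q'.num : ℤ) : ℝ) := by exact_mod_cast hpz
  have hrp : r = (p : ℝ)/q := by
    rw [← hq', Rat.cast_def, hpR]
  have hpq : p ≤ q := by
    have h2 : (p : ℝ)/q ≤ 1 := by rw [← hrp]; exact h1
    have h3 : (p : ℝ) ≤ (q : ℝ) := by
      rw [div_le_one hqR] at h2; exact h2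
    exact_mod_cast h3
  have hcop : Nat.Coprime p q := by
    have hred := q'.reduced
    have : q'.num.toNat = q'.num.natAbs := by omega
    rw [hpdef, hqdef, this]
    exact hred
  obtain ⟨c, hcX, hcv⟩ := exists_c hqpos hpq hcop hrp
  refine ⟨(↑(SF p q c) : Set LForm), ?_, (SF p q c).finite_toSet, ?_⟩
  · intro φ hφ
    exact SF_onlyX1 c hcX φ (by exact_mod_cast hφ)
  · ext α
    constructor
    · rintro ⟨hα1, hα2⟩
      refine ⟨hα1, ?_⟩
      have hIcc : ∀ n : ℕ, (fun _ => r) n ∈ Set.Icc (0:ℝ) 1 := fun _ => ⟨h0, h1⟩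
      have hval := hα2 (mkEval (fun _ => r) hIcc) rfl
      have hsem : evalFun (fun _ => r) α = (kdeg p q α : ℝ)/q :=
        kdeg_sem hqpos hpq hrp hα1
      have hv2 : (kdeg p q α : ℝ)/q = 1 := by
        rw [← hsem]; exact hval
      have hk : kdeg p q α = q := by
        have h4 : (kdeg p q α : ℝ) = (q : ℝ) := by
          field_simp at hv2; exact_mod_cast hv2
        exact_mod_cast h4
      have hsyn := (syn c hpq hα1).2
      rw [hk] at hsyn
      exact LProv.mp hsyn (LProv.hyp (by exact_mod_cast mem_SF_4 c))
    · rintro ⟨hα1, hprov⟩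
      refine ⟨hα1, fun v hv => ?_⟩
      apply LSound.sound hprov v
      intro β hβ
      have hβmem : β ∈ SF p q c := by exact_mod_cast hβ
      have hβX : β.onlyX1 := SF_onlyX1 c hcX β hβmem
      rw [eval_eq_evalFun v β, evalFun_onlyX1 hβX]
      have hv0 : v.w (LForm.var 0) = r := hv
      rw [hv0]
      exact SF_val c hqpos hpq hrp hcv β hβmem

end Lrat

/-- Finite axiomatisability criterion: for r ∈ [0,1], the theory Θ_r is
finitely axiomatisable in Ł₁ iff r is rational. -/
theorem Theta_finitely_axiomatisable_iff_rational (r : ℝ)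
    (hr : r ∈ Set.Icc (0 : ℝ) 1) :
    (∃ S : Set LForm, S ⊆ Form1 ∧ S.Finite ∧
        Theta r = {α | α ∈ Form1 ∧ LProv S α}) ↔
      ∃ q : ℚ, (q : ℝ) = r := by
  constructor
  · intro hFA
    by_contra hirr
    push_neg at hirr
    obtain ⟨S, hS1, hfin, heq⟩ := hFA
    exact Lirr.not_fin_ax hr.1 hr.2 hirr hS1 hfin heq
  · rintro ⟨q', hq'⟩
    exact Lrat.fin_ax hr.1 hr.2 hq'
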